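/- For u = (u_1,…,u_n) ∈ ℝⁿ set D(u) = Σ_{k=1}^n e^{−u_k} and γ_ij(u) = e^{−(u_i+u_j)/2}/D(u) for i ≠ j. For a real number z with |z| < 1/2, define the n×n matrix-valued function Ψ(u,z) by Ψ_iα(u,z) = (2e^{z u_α}/√(1 − 4z²))·[ (z − ½)·δ_iα + e^{−(u_i+u_α)/2}/D(u) ]. Then: (i) for every fixed α and all i ≠ j, ∂Ψ_iα/∂u_j = γ_ij·Ψ_jα; (ii) for every i and α, Σ_{k=1}^n ∂Ψ_iα/∂u_k = z·Ψ_iα; and (iii) the normalization Σ_{α=1}^n Ψ_iα(u,−z)·Ψ_jα(u,z) = δ_ij holds for all i, j. -/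

import Mathlib

set_option maxHeartbeats 1000000

/-- With `D(u) = ∑ₖ e^{-uₖ}`, `γ_ij = e^{-(uᵢ+uⱼ)/2}/D` for
`i ≠ j`, and the wave functions
`Ψ_iα(u,z) = (2e^{z u_α}/√(1-4z²)) [ (z - ½) δ_iα + e^{-(uᵢ+u_α)/2}/D ]`
for `|z| < 1/2`, one has: (i) `∂Ψ_iα/∂uⱼ = γ_ij Ψ_jα` for `i ≠ j`;
(ii) `∑ₖ ∂Ψ_iα/∂uₖ = z Ψ_iα`; and (iii) the normalization
`∑_α Ψ_iα(u,-z) Ψ_jα(u,z) = δ_ij`. -/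
theorem stmt18 {n : ℕ} (z : ℝ) (hz : |z| < 1 / 2)
    (γ : (Fin n → ℝ) → Fin n → Fin n → ℝ)
    (hγ : ∀ u : Fin n → ℝ, ∀ i j : Fin n, i ≠ j →
      γ u i j = Real.exp (-(u i + u j) / 2) / ∑ k, Real.exp (-u k))
    (Ψ : ℝ → (Fin n → ℝ) → Fin n → Fin n → ℝ)
    (hΨ : ∀ w : ℝ, ∀ u : Fin n → ℝ, ∀ i α : Fin n,
      Ψ w u i α =
        2 * Real.exp (w * u α) / Real.sqrt (1 - 4 * w ^ 2) *
          ((w - 1 / 2) * (if i = α then 1 else 0)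
            + Real.exp (-(u i + u α) / 2) / ∑ k, Real.exp (-u k))) :
    ∀ u : Fin n → ℝ,
      (∀ i α : Fin n,
        ∃ D : Fin n → ℝ,
          (∀ k : Fin n,
            HasDerivAt (fun t : ℝ => Ψ z (Function.update u k t) i α) (D k) (u k)) ∧
          (∀ k : Fin n, k ≠ i → D k = γ u i k * Ψ z u k α) ∧
          ∑ k, D k = z * Ψ z u i α) ∧
      (∀ i j : Fin n,
        ∑ α, Ψ (-z) u i α * Ψ z u j α = if i = j then 1 else 0) := by
  have hz2 : (0:ℝ) < 1 - 4 * z ^ 2 := by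
    obtain ⟨h1, h2⟩ := abs_lt.mp hz
    nlinarith
  have hsqpos : 0 < Real.sqrt (1 - 4 * z ^ 2) := Real.sqrt_pos.mpr hz2
  intro u
  constructor
  · -- parts (i) and (ii)
    intro i α
    have hS : 0 < ∑ m, Real.exp (-u m) :=
      Finset.sum_pos (fun m _ => Real.exp_pos _) ⟨i, Finset.mem_univ i⟩
    refine ⟨fun k =>
        z * (if α = k then 1 else 0) * Ψ z u i α
        + 2 * Real.exp (z * u α) / Real.sqrt (1 - 4 * z ^ 2) *
          (-(((if α = k then (1:ℝ) else 0) + (if i = k then (1:ℝ) else 0)) / 2) *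
              Real.exp (-(u i + u α) / 2) / (∑ m, Real.exp (-u m))
            + Real.exp (-u k) * Real.exp (-(u i + u α) / 2) / (∑ m, Real.exp (-u m)) ^ 2),
      ?_, ?_, ?_⟩
    · -- (i) the derivative exists with value D k
      intro k
      obtain ⟨a, ha⟩ : ∃ a : ℝ, a = (if α = k then (1:ℝ) else 0) := ⟨_, rfl⟩
      obtain ⟨b, hb⟩ : ∃ b : ℝ, b = (if i = k then (1:ℝ) else 0) := ⟨_, rfl⟩
      obtain ⟨C, hC⟩ : ∃ C : ℝ, C = ∑ m ∈ Finset.univ.erase k, Real.exp (-u m) := ⟨_, rfl⟩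
      have hC0 : 0 ≤ C := hC ▸ Finset.sum_nonneg fun m _ => (Real.exp_pos _).le
      have hae : ∀ t : ℝ, (if α = k then t else u α) = a * t + (1 - a) * u α := by
        intro t; rw [ha]; split_ifs <;> ring
      have hbe : ∀ t : ℝ, (if i = k then t else u i) = b * t + (1 - b) * u i := by
        intro t; rw [hb]; split_ifs <;> ring
      have hsum : ∀ t : ℝ, (∑ m, Real.exp (-(Function.update u k t m))) = Real.exp (-t) + C := by
        intro t
        rw [hC, ← Finset.add_sum_erase Finset.univ _ (Finset.mem_univ k)]
        congr 1
        · simp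
        · exact Finset.sum_congr rfl fun m hm => by
            rw [Function.update_of_ne (Finset.mem_erase.mp hm).1]
      have hfun : (fun t : ℝ => Ψ z (Function.update u k t) i α)
          = fun t : ℝ => 2 * Real.exp (z * (a * t + (1 - a) * u α)) / Real.sqrt (1 - 4 * z ^ 2) *
            ((z - 1/2) * (if i = α then (1:ℝ) else 0)
              + Real.exp (-((b * t + (1 - b) * u i) + (a * t + (1 - a) * u α)) / 2)
                / (Real.exp (-t) + C)) := by
        funext t
        rw [hΨ, hsum t]
        simp only [Function.update_apply, hae t, hbe t]
      have hne : Real.exp (-(u k)) + C ≠ 0 := by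
        have := Real.exp_pos (-(u k)); linarith
      have d1 : HasDerivAt (fun t : ℝ => z * (a * t + (1 - a) * u α)) (z * a) (u k) := by
        simpa using (((hasDerivAt_id (u k)).const_mul a).add_const ((1 - a) * u α)).const_mul z
      have d3 := (d1.exp.const_mul 2).div_const (Real.sqrt (1 - 4 * z ^ 2))
      have d4 : HasDerivAt
          (fun t : ℝ => -((b * t + (1 - b) * u i) + (a * t + (1 - a) * u α)) / 2)
          (-(b + a) / 2) (u k) := by
        have h := ((((hasDerivAt_id (u k)).const_mul b).add_const ((1 - b) * u i)).add
          (((hasDerivAt_id (u k)).const_mul a).add_const ((1 - a) * u α))).neg.div_const 2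
        exact h.congr_deriv (by ring)
      have d6 : HasDerivAt (fun t : ℝ => Real.exp (-t) + C) (-Real.exp (-(u k))) (u k) := by
        have h := (((hasDerivAt_id (u k)).neg).exp).add_const C
        exact h.congr_deriv (by simp)
      have d7 := (d4.exp.div d6 hne).const_add ((z - 1/2) * (if i = α then (1:ℝ) else 0))
      have d9 := d3.mul d7
      rw [hfun]
      refine d9.congr_deriv (Eq.symm ?_)
      have e1 : a * u k + (1 - a) * u α = u α := by
        rw [ha]; split_ifs with h
        · rw [h]; ring
        · ring
      have e2 : -((b * u k + (1 - b) * u i) + (a * u k + (1 - a) * u α)) / 2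
          = -(u i + u α) / 2 := by
        rw [ha, hb]
        rcases eq_or_ne α k with h1 | h1 <;> rcases eq_or_ne i k with h2 | h2 <;>
          simp [h1, h2] <;> ring
      have e3 : Real.exp (-(u k)) + C = ∑ m, Real.exp (-u m) := by
        rw [hC]
        exact Finset.add_sum_erase Finset.univ (fun m => Real.exp (-u m)) (Finset.mem_univ k)
      simp only [Pi.div_apply]
      beta_reduce
      rw [e2, e1, e3, ← ha, ← hb, hΨ z u i α]
      obtain ⟨S', hS'eq⟩ : ∃ x, (∑ m, Real.exp (-u m)) = x := ⟨_, rfl⟩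
      obtain ⟨Q, hQeq⟩ : ∃ x, Real.sqrt (1 - 4 * z ^ 2) = x := ⟨_, rfl⟩
      have hS'pos : 0 < S' := hS'eq ▸ hS
      have hQpos : 0 < Q := hQeq ▸ hsqpos
      rw [hS'eq, hQeq]
      field_simp
      ring
    · -- (i) off-diagonal identification with γ
      intro k hk
      have hik : i ≠ k := Ne.symm hk
      beta_reduce
      obtain ⟨P, hP⟩ : ∃ P : Fin n → ℝ, P = fun m : Fin n => Real.exp (-(u m / 2)) := ⟨_, rfl⟩
      have hexpand : ∀ x y : Fin n, Real.exp (-(u x + u y) / 2) = P x * P y := by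
        intro x y; rw [hP, ← Real.exp_add]; congr 1; ring
      have hPP : Real.exp (-u k) = P k * P k := by
        rw [hP, ← Real.exp_add]; congr 1; ring
      rw [hγ u i k hik, hΨ z u k α, hΨ z u i α, hexpand, hexpand, hexpand, hPP, if_neg hik]
      obtain ⟨S', hS'eq⟩ : ∃ x, (∑ m, Real.exp (-u m)) = x := ⟨_, rfl⟩
      obtain ⟨Q, hQeq⟩ : ∃ x, Real.sqrt (1 - 4 * z ^ 2) = x := ⟨_, rfl⟩
      have hS'pos : 0 < S' := hS'eq ▸ hS
      have hQpos : 0 < Q := hQeq ▸ hsqpos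
      rw [hS'eq, hQeq]
      rcases eq_or_ne α k with h | h
      · subst h
        rw [if_pos rfl, if_neg (show i ≠ α from hik)]
        field_simp
        ring
      · rw [if_neg h, if_neg (show ¬ k = α from fun hh => h hh.symm)]
        field_simp
        ring
    · -- (ii) the sum of the derivatives
      have hterm : ∀ k : Fin n,
          z * (if α = k then 1 else 0) * Ψ z u i α
          + 2 * Real.exp (z * u α) / Real.sqrt (1 - 4 * z ^ 2) *
            (-(((if α = k then (1:ℝ) else 0) + (if i = k then (1:ℝ) else 0)) / 2) *
                Real.exp (-(u i + u α) / 2) / (∑ m, Real.exp (-u m))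
              + Real.exp (-u k) * Real.exp (-(u i + u α) / 2) / (∑ m, Real.exp (-u m)) ^ 2)
          = (z * Ψ z u i α) * (if α = k then 1 else 0)
            + (2 * Real.exp (z * u α) / Real.sqrt (1 - 4 * z ^ 2) *
                (-(Real.exp (-(u i + u α) / 2) / (∑ m, Real.exp (-u m))) / 2)) * (if α = k then 1 else 0)
            + (2 * Real.exp (z * u α) / Real.sqrt (1 - 4 * z ^ 2) *
                (-(Real.exp (-(u i + u α) / 2) / (∑ m, Real.exp (-u m))) / 2)) * (if i = k then 1 else 0)
            + (2 * Real.exp (z * u α) / Real.sqrt (1 - 4 * z ^ 2) *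
                (Real.exp (-(u i + u α) / 2) / (∑ m, Real.exp (-u m)) ^ 2)) * Real.exp (-u k) :=
        fun k => by ring
      rw [Finset.sum_congr rfl (fun k _ => hterm k)]
      rw [Finset.sum_add_distrib, Finset.sum_add_distrib, Finset.sum_add_distrib]
      simp only [← Finset.mul_sum]
      have t1 : ∑ k : Fin n, (if α = k then (1:ℝ) else 0) = 1 := by simp
      have t2 : ∑ k : Fin n, (if i = k then (1:ℝ) else 0) = 1 := by simp
      rw [t1, t2]
      obtain ⟨S', hS'eq⟩ : ∃ x, (∑ m, Real.exp (-u m)) = x := ⟨_, rfl⟩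
      obtain ⟨Q, hQeq⟩ : ∃ x, Real.sqrt (1 - 4 * z ^ 2) = x := ⟨_, rfl⟩
      have hS'pos : 0 < S' := hS'eq ▸ hS
      have hQpos : 0 < Q := hQeq ▸ hsqpos
      rw [hS'eq, hQeq, hΨ z u i α, hS'eq, hQeq]
      field_simp
      ring
  · -- part (iii): normalization
    intro i j
    obtain ⟨S, hSdef⟩ : ∃ S : ℝ, S = ∑ k, Real.exp (-u k) := ⟨_, rfl⟩
    obtain ⟨q, hq⟩ : ∃ q : ℝ, q = Real.sqrt (1 - 4 * z ^ 2) := ⟨_, rfl⟩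
    obtain ⟨P, hP⟩ : ∃ P : Fin n → ℝ, P = fun α : Fin n => Real.exp (-(u α / 2)) := ⟨_, rfl⟩
    have hS : 0 < S := hSdef ▸ Finset.sum_pos (fun k _ => Real.exp_pos _) ⟨i, Finset.mem_univ i⟩
    have hsqpos' : 0 < q := hq ▸ hsqpos
    have hsqsq : q * q = 1 - 4 * z ^ 2 := by rw [hq]; exact Real.mul_self_sqrt hz2.le
    have hexpand : ∀ x y : Fin n, Real.exp (-(u x + u y) / 2) = P x * P y := by
      intro x y; rw [hP, ← Real.exp_add]; congr 1; ring
    have key : ∀ α : Fin n, Ψ (-z) u i α * Ψ z u j α =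
        (4 / q ^ 2) * ((1/4 - z^2) * ((if i = α then (1:ℝ) else 0) * (if j = α then (1:ℝ) else 0)))
        + (4 / q ^ 2) * ((-z - 1/2) / S) * ((if i = α then (1:ℝ) else 0) * (P j * P α))
        + (4 / q ^ 2) * ((z - 1/2) / S) * ((if j = α then (1:ℝ) else 0) * (P i * P α))
        + (4 / q ^ 2) * (P i * P j / S^2) * (P α * P α) := by
      intro α
      rw [hΨ, hΨ]
      have hnegsq : 1 - 4 * (-z) ^ 2 = 1 - 4 * z ^ 2 := by ring
      have h1 : Real.exp (-z * u α) = (Real.exp (z * u α))⁻¹ := by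
        rw [← Real.exp_neg]; congr 1; ring
      rw [hnegsq, h1, hexpand, hexpand, ← hq, ← hSdef]
      rcases eq_or_ne i α with hi | hi <;> rcases eq_or_ne j α with hj | hj
      · rw [if_pos hi, if_pos hj, hi, hj]; field_simp; ring
      · rw [if_pos hi, if_neg hj, hi]; field_simp; ring
      · rw [if_neg hi, if_pos hj, hj]; field_simp; ring
      · rw [if_neg hi, if_neg hj]; field_simp; ring
    rw [Finset.sum_congr rfl (fun α _ => key α)]
    rw [Finset.sum_add_distrib, Finset.sum_add_distrib, Finset.sum_add_distrib]
    simp only [← Finset.mul_sum]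
    have s1 : (∑ α, (if i = α then (1:ℝ) else 0) * if j = α then (1:ℝ) else 0)
        = if i = j then 1 else 0 := by simp
    have s2 : ∑ α, (if i = α then (1:ℝ) else 0) * (P j * P α) = P j * P i := by simp
    have s3 : ∑ α, (if j = α then (1:ℝ) else 0) * (P i * P α) = P i * P j := by simp
    have s4 : ∑ α, P α * P α = S := by
      rw [hSdef]
      refine Finset.sum_congr rfl fun α _ => ?_
      rw [hP, ← Real.exp_add]; congr 1; ring
    rw [s1, s2, s3, s4]
    have hqq : q ^ 2 = 1 - 4 * z ^ 2 := by rw [sq]; exact hsqsq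
    rw [hqq]
    rcases eq_or_ne i j with hij | hij
    · rw [if_pos hij]
      field_simp
      ring
    · rw [if_neg hij]
      field_simp
      ring
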